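/- Correctness of the DP for NAP with 0/1 survival probabilities: for a rooted tree T with leaf costs c(x_i), define F[w,d] as the minimum total cost of a set of leaves A ⊆ off(w) such that the sum of λ(e) over edges e in T_w lying on a path from w to some leaf of A is at least d. Then for an internal vertex v with children u_1,...,u_t, the recurrence G[v,1,d] = F[u_1,d]' (where F[u,d]' accounts for the edge (v,u)) and G[v,i+1,d] = min_{d' ∈ [d]_0} (G[v,i,d-d'] + F[u_{i+1},d']') with F[v,d] = G[v,t,d] correctly computes these minima; consequently the instance is a yes-instance iff F[root, D] ≤ B. -/

import Mathlib

/-- Rooted edge-weighted trees with leaves labelled by `ι`: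
a leaf, or an internal vertex with a list of (edge weight, subtree) children. -/
inductive WTree (ι : Type) : Type
  | leaf (x : ι)
  | node (children : List (ℕ × WTree ι))

namespace WTree

variable {ι : Type} [DecidableEq ι]

mutual
  /-- The set of leaf labels of a tree. -/
  def leaves : WTree ι → Finset ι
    | .leaf x => {x}
    | .node cs => leavesL cs
  /-- The set of leaf labels of a list of weighted subtrees. -/
  def leavesL : List (ℕ × WTree ι) → Finset ι
    | [] => ∅
    | (_, t) :: cs => leaves t ∪ leavesL cs
end

mutual
  /-- For a 0/1 selection `A` of surviving leaves, `pd A t` is the total weight of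
  the edges of `t` lying on a path from the root of `t` to a leaf of `A`. -/
  def pd (A : Finset ι) : WTree ι → ℕ
    | .leaf _ => 0
    | .node cs => pdL A cs
  /-- `pdL A cs`: as `pd`, for a list of children together with their incoming edges. -/
  def pdL (A : Finset ι) : List (ℕ × WTree ι) → ℕ
    | [] => 0
    | (w, t) :: cs => (if (leaves t ∩ A).Nonempty then w + pd A t else 0) + pdL A cs
end

open Classical in
/-- `mcE c w t d`: minimum cost of a leaf selection of `t` achieving diversity `≥ d`
in `t` together with its incoming edge of weight `w` (the primed table `F[·,·]'`). -/
noncomputable def mcE (c : ι → ℕ) (w : ℕ) (t : WTree ι) (d : ℕ) : ℕ∞ :=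
  (t.leaves.powerset.filter
    (fun A => d ≤ (if (t.leaves ∩ A).Nonempty then w else 0) + pd A t)).inf
    (fun A => ((∑ x ∈ A, c x : ℕ) : ℕ∞))

open Classical in
/-- `mcList c cs d`: minimum cost of a selection achieving diversity `≥ d` among the
children subtrees `cs` including their incoming edges (the table `G[v,i,·]`). -/
noncomputable def mcList (c : ι → ℕ) (cs : List (ℕ × WTree ι)) (d : ℕ) : ℕ∞ :=
  ((leavesL cs).powerset.filter (fun A => d ≤ pdL A cs)).inf
    (fun A => ((∑ x ∈ A, c x : ℕ) : ℕ∞))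

open Classical in
/-- `mc0 c t d`: minimum cost of a leaf selection achieving diversity `≥ d` within
`t` only (the table `F[v,·]`; at the root no incoming edge exists). -/
noncomputable def mc0 (c : ι → ℕ) (t : WTree ι) (d : ℕ) : ℕ∞ :=
  (t.leaves.powerset.filter (fun A => d ≤ pd A t)).inf
    (fun A => ((∑ x ∈ A, c x : ℕ) : ℕ∞))

mutual
  theorem pd_congr (A B : Finset ι) :
      ∀ t : WTree ι, A ∩ leaves t = B ∩ leaves t → pd A t = pd B t
    | .leaf _, _ => rfl
    | .node cs, h => pdL_congr A B cs (by simpa [leaves] using h)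
  theorem pdL_congr (A B : Finset ι) :
      ∀ cs : List (ℕ × WTree ι), A ∩ leavesL cs = B ∩ leavesL cs → pdL A cs = pdL B cs
    | [], _ => rfl
    | (w, t) :: cs, h => by
      have h1 : A ∩ leaves t = B ∩ leaves t := by
        ext a; have := Finset.ext_iff.mp h a; simp [leavesL] at this ⊢; tauto
      have h2 : A ∩ leavesL cs = B ∩ leavesL cs := by
        ext a; have := Finset.ext_iff.mp h a; simp [leavesL] at this ⊢; tauto
      have h1' : leaves t ∩ A = leaves t ∩ B := by
        rw [Finset.inter_comm, h1, Finset.inter_comm]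
      simp only [pdL, h1', pd_congr A B t h1, pdL_congr A B cs h2]
end

mutual
  theorem pd_empty (A : Finset ι) :
      ∀ t : WTree ι, A ∩ leaves t = ∅ → pd A t = 0
    | .leaf _, _ => rfl
    | .node cs, h => pdL_empty A cs (by simpa [leaves] using h)
  theorem pdL_empty (A : Finset ι) :
      ∀ cs : List (ℕ × WTree ι), A ∩ leavesL cs = ∅ → pdL A cs = 0
    | [], _ => rfl
    | (w, t) :: cs, h => by
      have h1 : A ∩ leaves t = ∅ := by
        ext a; have := Finset.ext_iff.mp h a; simp [leavesL] at this ⊢; tauto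
      have h2 : A ∩ leavesL cs = ∅ := by
        ext a; have := Finset.ext_iff.mp h a; simp [leavesL] at this ⊢; tauto
      have h1' : ¬ (leaves t ∩ A).Nonempty := by
        rw [Finset.inter_comm, Finset.not_nonempty_iff_eq_empty]; exact h1
      simp [pdL, h1', pdL_empty A cs h2]
end

open Classical in
theorem mcE_le {c : ι → ℕ} {w : ℕ} {t : WTree ι} {d : ℕ} {A : Finset ι}
    (hA : A ⊆ t.leaves)
    (h : d ≤ (if (t.leaves ∩ A).Nonempty then w else 0) + pd A t) :
    mcE c w t d ≤ ((∑ x ∈ A, c x : ℕ) : ℕ∞) := by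
  apply Finset.inf_le
  simp only [Finset.mem_filter, Finset.mem_powerset]
  exact ⟨hA, by convert h⟩

open Classical in
theorem mcList_le {c : ι → ℕ} {cs : List (ℕ × WTree ι)} {d : ℕ} {A : Finset ι}
    (hA : A ⊆ leavesL cs) (h : d ≤ pdL A cs) :
    mcList c cs d ≤ ((∑ x ∈ A, c x : ℕ) : ℕ∞) := by
  apply Finset.inf_le
  simp only [Finset.mem_filter, Finset.mem_powerset]
  exact ⟨hA, by convert h⟩

open Classical in
theorem mcE_attained {c : ι → ℕ} {w : ℕ} {t : WTree ι} {d : ℕ} (h : mcE c w t d ≠ ⊤) :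
    ∃ A, A ⊆ t.leaves ∧ (d ≤ (if (t.leaves ∩ A).Nonempty then w else 0) + pd A t) ∧
      mcE c w t d = ((∑ x ∈ A, c x : ℕ) : ℕ∞) := by
  by_cases hne : (t.leaves.powerset.filter
      (fun A => d ≤ (if (t.leaves ∩ A).Nonempty then w else 0) + pd A t)).Nonempty
  · obtain ⟨A, hmem, heq⟩ := Finset.exists_mem_eq_inf _ hne
      (fun A => ((∑ x ∈ A, c x : ℕ) : ℕ∞))
    simp only [Finset.mem_filter, Finset.mem_powerset] at hmem
    exact ⟨A, hmem.1, hmem.2, by unfold mcE; convert heq⟩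
  · exfalso; apply h
    rw [Finset.not_nonempty_iff_eq_empty] at hne
    unfold mcE
    convert Finset.inf_empty

open Classical in
theorem mcList_attained {c : ι → ℕ} {cs : List (ℕ × WTree ι)} {d : ℕ}
    (h : mcList c cs d ≠ ⊤) :
    ∃ A, A ⊆ leavesL cs ∧ d ≤ pdL A cs ∧
      mcList c cs d = ((∑ x ∈ A, c x : ℕ) : ℕ∞) := by
  by_cases hne : ((leavesL cs).powerset.filter (fun A => d ≤ pdL A cs)).Nonempty
  · obtain ⟨A, hmem, heq⟩ := Finset.exists_mem_eq_inf _ hne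
      (fun A => ((∑ x ∈ A, c x : ℕ) : ℕ∞))
    simp only [Finset.mem_filter, Finset.mem_powerset] at hmem
    exact ⟨A, hmem.1, hmem.2, by unfold mcList; convert heq⟩
  · exfalso; apply h
    rw [Finset.not_nonempty_iff_eq_empty] at hne
    unfold mcList
    convert Finset.inf_empty

open Classical in
theorem mc0_le {c : ι → ℕ} {t : WTree ι} {d : ℕ} {A : Finset ι}
    (hA : A ⊆ t.leaves) (h : d ≤ pd A t) :
    mc0 c t d ≤ ((∑ x ∈ A, c x : ℕ) : ℕ∞) := by
  apply Finset.inf_le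
  simp only [Finset.mem_filter, Finset.mem_powerset]
  exact ⟨hA, by convert h⟩

open Classical in
theorem mc0_attained {c : ι → ℕ} {t : WTree ι} {d : ℕ} (h : mc0 c t d ≠ ⊤) :
    ∃ A, A ⊆ t.leaves ∧ d ≤ pd A t ∧
      mc0 c t d = ((∑ x ∈ A, c x : ℕ) : ℕ∞) := by
  by_cases hne : (t.leaves.powerset.filter (fun A => d ≤ pd A t)).Nonempty
  · obtain ⟨A, hmem, heq⟩ := Finset.exists_mem_eq_inf _ hne
      (fun A => ((∑ x ∈ A, c x : ℕ) : ℕ∞))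
    simp only [Finset.mem_filter, Finset.mem_powerset] at hmem
    exact ⟨A, hmem.1, hmem.2, by unfold mc0; convert heq⟩
  · exfalso; apply h
    rw [Finset.not_nonempty_iff_eq_empty] at hne
    unfold mc0
    convert Finset.inf_empty

/-- Correctness of the DP for NAP with 0/1 survival probabilities:
leaf initialization, `G[v,1,d] = F[u_1,d]'`, the recurrence
`G[v,i+1,d] = min_{d' ≤ d} (G[v,i,d-d'] + F[u_{i+1},d']')` (for children with
disjoint leaf sets), `F[v,d] = G[v,t,d]`, and consequently the instance is a
yes-instance iff `F[root,D] ≤ B`. -/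
theorem stmt_13 (c : ι → ℕ) (B D : ℕ) (t : WTree ι) :
    (∀ (w : ℕ) (x : ι) (d : ℕ),
      mcE c w (.leaf x) d =
        if d = 0 then 0 else if d ≤ w then ((c x : ℕ) : ℕ∞) else ⊤) ∧
    (∀ (w1 : ℕ) (t1 : WTree ι) (d : ℕ), mcList c [(w1, t1)] d = mcE c w1 t1 d) ∧
    (∀ (w1 : ℕ) (t1 : WTree ι) (cs : List (ℕ × WTree ι)) (d : ℕ),
      Disjoint (leaves t1) (leavesL cs) →
      mcList c ((w1, t1) :: cs) d =
        (Finset.range (d + 1)).inf (fun d' => mcE c w1 t1 d' + mcList c cs (d - d'))) ∧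
    (∀ (cs : List (ℕ × WTree ι)) (d : ℕ), mc0 c (.node cs) d = mcList c cs d) ∧
    ((∃ A ⊆ t.leaves, (∑ x ∈ A, c x) ≤ B ∧ D ≤ pd A t) ↔ mc0 c t D ≤ (B : ℕ∞)) := by
  classical
  refine ⟨?_, ?_, ?_, ?_, ?_⟩
  · -- leaf initialization
    intro w x d
    unfold mcE
    simp only [leaves]
    have hps : ({x} : Finset ι).powerset = {∅, {x}} := by
      ext A; simp [Finset.subset_singleton_iff]
    rw [hps]
    by_cases hd : d = 0
    · subst hd
      simp [Finset.filter_insert, Finset.filter_singleton, pd]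
    · by_cases hw : d ≤ w
      · simp [Finset.filter_insert, Finset.filter_singleton, pd, hd, hw]
      · simp [Finset.filter_insert, Finset.filter_singleton, pd, hd, hw]
  · -- singleton list
    intro w1 t1 d
    apply le_antisymm
    · by_cases h : mcE c w1 t1 d = ⊤
      · rw [h]; exact le_top
      obtain ⟨A, hsub, hcond, heq⟩ := mcE_attained h
      rw [heq]
      apply mcList_le (cs := [(w1, t1)]) (by simp [leavesL, hsub])
      by_cases hne : (leaves t1 ∩ A).Nonempty
      · simp only [hne, if_true] at hcond
        simp [pdL, hne]; omega
      · have hA : leaves t1 ∩ A = A := by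
          rw [Finset.inter_comm]; exact Finset.inter_eq_left.mpr hsub
        have hA0 : A = ∅ := by
          rw [Finset.not_nonempty_iff_eq_empty] at hne; rw [← hA]; exact hne
        have hp : pd A t1 = 0 := pd_empty A t1 (by simp [hA0])
        simp only [hne, if_false, hp] at hcond
        simp [pdL, hne]; omega
    · by_cases h : mcList c [(w1, t1)] d = ⊤
      · rw [h]; exact le_top
      obtain ⟨A, hsub, hcond, heq⟩ := mcList_attained h
      rw [heq]
      have hsub' : A ⊆ leaves t1 := by simpa [leavesL] using hsub
      apply mcE_le hsub'
      by_cases hne : (leaves t1 ∩ A).Nonempty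
      · simp only [pdL, hne, if_true] at hcond
        simp [hne]; omega
      · have hA : leaves t1 ∩ A = A := by
          rw [Finset.inter_comm]; exact Finset.inter_eq_left.mpr hsub'
        have hA0 : A = ∅ := by
          rw [Finset.not_nonempty_iff_eq_empty] at hne; rw [← hA]; exact hne
        have hp : pd A t1 = 0 := pd_empty A t1 (by simp [hA0])
        simp only [pdL, hne, if_false] at hcond
        simp [hne, hp]; omega
  · -- the recurrence
    intro w1 t1 cs d hdisj
    apply le_antisymm
    · apply Finset.le_inf
      intro d' hd'
      rw [Finset.mem_range] at hd'
      have hd'd : d' ≤ d := by omega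
      by_cases h1 : mcE c w1 t1 d' = ⊤
      · rw [h1, top_add]; exact le_top
      by_cases h2 : mcList c cs (d - d') = ⊤
      · rw [h2, add_top]; exact le_top
      obtain ⟨A1, hs1, hc1, he1⟩ := mcE_attained h1
      obtain ⟨A2, hs2, hc2, he2⟩ := mcList_attained h2
      have hdisjA : Disjoint A1 A2 := hdisj.mono hs1 hs2
      rw [he1, he2, ← Nat.cast_add, ← Finset.sum_union hdisjA]
      have hsubU : A1 ∪ A2 ⊆ leavesL ((w1, t1) :: cs) := by
        simp only [leavesL]
        exact Finset.union_subset_union hs1 hs2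
      apply mcList_le hsubU
      have hd12 : ∀ a ∈ A2, a ∉ leaves t1 := by
        intro a ha
        exact fun hal => (Finset.disjoint_left.mp hdisj hal) (hs2 ha)
      have e1 : leaves t1 ∩ (A1 ∪ A2) = leaves t1 ∩ A1 := by
        ext a
        simp only [Finset.mem_inter, Finset.mem_union]
        constructor
        · rintro ⟨hl, h | h⟩
          · exact ⟨hl, h⟩
          · exact absurd hl (hd12 a h)
        · rintro ⟨hl, h⟩; exact ⟨hl, Or.inl h⟩
      have e2 : pd (A1 ∪ A2) t1 = pd A1 t1 := by
        apply pd_congr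
        ext a
        simp only [Finset.mem_inter, Finset.mem_union]
        constructor
        · rintro ⟨h | h, hl⟩
          · exact ⟨h, hl⟩
          · exact absurd hl (hd12 a h)
        · rintro ⟨h, hl⟩; exact ⟨Or.inl h, hl⟩
      have e3 : pdL (A1 ∪ A2) cs = pdL A2 cs := by
        apply pdL_congr
        ext a
        simp only [Finset.mem_inter, Finset.mem_union]
        constructor
        · rintro ⟨h | h, hl⟩
          · exact absurd (hs1 h) (Finset.disjoint_left.mp hdisj · hl)
          · exact ⟨h, hl⟩
        · rintro ⟨h, hl⟩; exact ⟨Or.inr h, hl⟩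
      show d ≤ pdL (A1 ∪ A2) ((w1, t1) :: cs)
      simp only [pdL, e1, e2, e3]
      by_cases hne : (leaves t1 ∩ A1).Nonempty
      · simp only [hne, if_true] at hc1 ⊢
        omega
      · have hA : leaves t1 ∩ A1 = A1 := by
          rw [Finset.inter_comm]; exact Finset.inter_eq_left.mpr hs1
        have hA0 : A1 = ∅ := by
          rw [Finset.not_nonempty_iff_eq_empty] at hne; rw [← hA]; exact hne
        have hp : pd A1 t1 = 0 := pd_empty A1 t1 (by simp [hA0])
        simp only [hne, if_false, hp] at hc1 ⊢
        omega
    · by_cases hL : mcList c ((w1, t1) :: cs) d = ⊤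
      · rw [hL]; exact le_top
      obtain ⟨A, hsub, hcond, heq⟩ := mcList_attained hL
      rw [heq]
      set A1 := A ∩ leaves t1 with hA1
      set A2 := A ∩ leavesL cs with hA2
      set X := if (leaves t1 ∩ A).Nonempty then w1 + pd A t1 else 0 with hX
      have hcond' : d ≤ X + pdL A cs := by simpa [pdL, ← hX] using hcond
      have hdmem : min d X ∈ Finset.range (d + 1) := by
        rw [Finset.mem_range]; omega
      refine le_trans (Finset.inf_le hdmem) ?_
      have hAeq : A = A1 ∪ A2 := by
        ext a
        simp only [hA1, hA2, Finset.mem_inter, Finset.mem_union]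
        constructor
        · intro h
          have := hsub h
          simp only [leavesL, Finset.mem_union] at this
          rcases this with h' | h'
          · exact Or.inl ⟨h, h'⟩
          · exact Or.inr ⟨h, h'⟩
        · rintro (⟨h, _⟩ | ⟨h, _⟩) <;> exact h
      have hdisjA : Disjoint A1 A2 :=
        hdisj.mono Finset.inter_subset_right Finset.inter_subset_right
      have hcost : ((∑ x ∈ A, c x : ℕ) : ℕ∞) =
          ((∑ x ∈ A1, c x : ℕ) : ℕ∞) + ((∑ x ∈ A2, c x : ℕ) : ℕ∞) := by
        rw [hAeq, Finset.sum_union hdisjA, Nat.cast_add]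
      rw [hcost]
      have hm1 : mcE c w1 t1 (min d X) ≤ ((∑ x ∈ A1, c x : ℕ) : ℕ∞) := by
        apply mcE_le Finset.inter_subset_right
        have ei : leaves t1 ∩ A1 = leaves t1 ∩ A := by
          ext a; simp only [hA1, Finset.mem_inter]; tauto
        have ep : pd A1 t1 = pd A t1 := by
          apply pd_congr
          ext a; simp only [hA1, Finset.mem_inter]; tauto
        rw [ei, ep]
        by_cases hne : (leaves t1 ∩ A).Nonempty
        · simp only [hne, if_true] at hX ⊢
          omega
        · have hp : pd A t1 = 0 :=
            pd_empty A t1 (by rwa [Finset.inter_comm, ← Finset.not_nonempty_iff_eq_empty])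
          simp only [hne, if_false, hp] at hX ⊢
          omega
      have hm2 : mcList c cs (d - min d X) ≤ ((∑ x ∈ A2, c x : ℕ) : ℕ∞) := by
        apply mcList_le Finset.inter_subset_right
        have ep : pdL A2 cs = pdL A cs := by
          apply pdL_congr
          ext a; simp only [hA2, Finset.mem_inter]; tauto
        rw [ep]
        omega
      exact add_le_add hm1 hm2
  · -- mc0 = mcList
    intro cs d
    apply le_antisymm
    · by_cases h : mcList c cs d = ⊤
      · rw [h]; exact le_top
      obtain ⟨A, hsub, hcond, heq⟩ := mcList_attained h
      rw [heq]
      exact mc0_le (t := .node cs) (by simpa [leaves] using hsub) (by simpa [pd] using hcond)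
    · by_cases h : mc0 c (.node cs) d = ⊤
      · rw [h]; exact le_top
      obtain ⟨A, hsub, hcond, heq⟩ := mc0_attained h
      rw [heq]
      exact mcList_le (by simpa [leaves] using hsub) (by simpa [pd] using hcond)
  · -- yes-instance characterization
    constructor
    · rintro ⟨A, hsub, hcost, hpd⟩
      exact le_trans (mc0_le hsub hpd) (by exact_mod_cast hcost)
    · intro h
      have hne : mc0 c t D ≠ ⊤ := by
        intro hh
        rw [hh, top_le_iff] at h
        exact (ENat.coe_ne_top B) h
      obtain ⟨A, hsub, hpd, heq⟩ := mc0_attained hne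
      refine ⟨A, hsub, ?_, hpd⟩
      rw [heq] at h
      exact_mod_cast h

end WTree
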